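/- Let k ≥ 1 and let F₀, F₁, …, F_k be classes of functions, where F_j is a class of functions ({0,1}^{s_j})^{n_j} → ℝ. For j = 1,…,k let (R^{(j)}, σ^{(j)}) be a (d_j, K_j, ε_j)-weighted pseudorandom reduction from F_{j−1} to F_j. Then the composition (R^{(1)}∘⋯∘R^{(k)}, σ^{(1)}⋯σ^{(k)}), defined by (R^{(1)}∘⋯∘R^{(k)})(x,(i₁,…,i_k)) = R^{(1)}(R^{(2)}(⋯R^{(k)}(x,i_k)⋯, i₂), i₁) and (σ^{(1)}⋯σ^{(k)})(i₁,…,i_k) = Π_{j=1}^{k} σ^{(j)}(i_j), is a (Σ_{j=1}^{k} d_j, Π_{j=1}^{k} K_j, Σ_{j=1}^{k} (Π_{t=1}^{j−1} K_t)·ε_j)-weighted pseudorandom reduction from F₀ to F_k. -/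

import Mathlib

open Real Finset
open scoped Classical

noncomputable section

/-- Expectation of a real-valued function under the uniform distribution on a finite type. -/
def uniformExp {α : Type*} [Fintype α] (f : α → ℝ) : ℝ :=
  (∑ x, f x) / (Fintype.card α)

/-- A read-once branching program of length `n`, alphabet `{0,1}^s`, width `w`. -/
structure ROBP (n s w : ℕ) where
  δ : Fin n → Fin w → (Fin s → Bool) → Fin w
  start : Fin w
  accept : Finset (Fin w)

def ROBP.run {n s w : ℕ} (P : ROBP n s w) (x : Fin n → Fin s → Bool) : Fin w :=
  Fin.foldl n (fun v i => P.δ i v (x i)) P.start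

def ROBP.fn {n s w : ℕ} (P : ROBP n s w) (x : Fin n → Fin s → Bool) : ℝ :=
  if P.run x ∈ P.accept then 1 else 0

/-- The class of functions computed by ROBPs of length `n`, alphabet `{0,1}^s`, width `w`. -/
def Bclass (n s w : ℕ) : Set ((Fin n → Fin s → Bool) → ℝ) :=
  {f | ∃ P : ROBP n s w, f = P.fn}

/-- `(G, σ)` is a `W`-bounded `ε`-WPRG for the class `F`. -/
def IsWPRG {n s : ℕ} {ι : Type} [Fintype ι]
    (F : Set ((Fin n → Fin s → Bool) → ℝ))
    (G : ι → Fin n → Fin s → Bool) (σ : ι → ℝ) (W ε : ℝ) : Prop :=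
  (∀ r, |σ r| ≤ W) ∧
  ∀ f ∈ F, |uniformExp f - uniformExp (fun r => σ r * f (G r))| ≤ ε

/-- `G` is an `ε`-PRG for the class `F`. -/
def IsPRG {n s : ℕ} {ι : Type} [Fintype ι]
    (F : Set ((Fin n → Fin s → Bool) → ℝ))
    (G : ι → Fin n → Fin s → Bool) (ε : ℝ) : Prop :=
  ∀ f ∈ F, |uniformExp f - uniformExp (fun r => f (G r))| ≤ ε

/-- `(R, σ)` is a `(log₂ card ι, K, ε)`-weighted pseudorandom reduction from `F₀` to `F₁`. -/
def IsWPR {n₀ s₀ n₁ s₁ : ℕ} {ι : Type} [Fintype ι]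
    (F₀ : Set ((Fin n₀ → Fin s₀ → Bool) → ℝ))
    (F₁ : Set ((Fin n₁ → Fin s₁ → Bool) → ℝ))
    (R : (Fin n₁ → Fin s₁ → Bool) → ι → Fin n₀ → Fin s₀ → Bool)
    (σ : ι → ℝ) (K ε : ℝ) : Prop :=
  (∀ f ∈ F₀,
      |uniformExp f - uniformExp (fun i => σ i * uniformExp (fun x => f (R x i)))| ≤ ε) ∧
  (∀ i, |σ i| ≤ K) ∧
  (∀ f ∈ F₀, ∀ i, (fun x => f (R x i)) ∈ F₁)

def ROBP.Regular {n s w : ℕ} (P : ROBP n s w) : Prop :=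
  ∀ (i : Fin n) (v : Fin w),
    (Finset.univ.filter (fun ux : Fin w × (Fin s → Bool) => P.δ i ux.1 ux.2 = v)).card = 2 ^ s

def ROBP.Permutation {n s w : ℕ} (P : ROBP n s w) : Prop :=
  ∀ (i : Fin n) (x : Fin s → Bool), Function.Bijective (fun u => P.δ i u x)

/-- Regular ROBPs of length `n`, alphabet `{0,1}^s`, width `w`. -/
def Rclass (n s w : ℕ) : Set ((Fin n → Fin s → Bool) → ℝ) :=
  {f | ∃ P : ROBP n s w, P.Regular ∧ f = P.fn}

/-- Permutation ROBPs of length `n` over `{0,1}^s`, unbounded width, a single accept node. -/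
def Pclass (n s : ℕ) : Set ((Fin n → Fin s → Bool) → ℝ) :=
  {f | ∃ (w : ℕ) (P : ROBP n s w), P.Permutation ∧ P.accept.card = 1 ∧ f = P.fn}

/-- Permutation ROBPs of length `n`, alphabet `{0,1}^s`, width `w`, arbitrary accept set. -/
def PermClass (n s w : ℕ) : Set ((Fin n → Fin s → Bool) → ℝ) :=
  {f | ∃ P : ROBP n s w, P.Permutation ∧ f = P.fn}

/-- Run `P` starting from node `v` in layer `i` (only the transitions from layer `i` on are applied). -/
def ROBP.runFrom {n s w : ℕ} (P : ROBP n s w) (i : ℕ) (v : Fin w)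
    (x : Fin n → Fin s → Bool) : Fin w :=
  Fin.foldl n (fun u j => if i ≤ (j : ℕ) then P.δ j u (x j) else u) v

/-- Acceptance probability of the subprogram of `P` started at node `v` of layer `i`. -/
def ROBP.valueAt {n s w : ℕ} (P : ROBP n s w) (i : ℕ) (v : Fin w) : ℝ :=
  uniformExp (fun x : Fin n → Fin s → Bool => if P.runFrom i v x ∈ P.accept then (1 : ℝ) else 0)

/-- The weight `W(f)` of an ROBP: the sum over all edges of the differences of acceptance values. -/
def ROBP.weight {n s w : ℕ} (P : ROBP n s w) : ℝ :=
  ∑ i : Fin n, ∑ u : Fin w, ∑ x : Fin s → Bool,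
    |P.valueAt ((i : ℕ) + 1) (P.δ i u x) - P.valueAt (i : ℕ) u|

/-- `(k,ε)`-extractor. -/
def IsExtractor (N d m : ℕ)
    (Ext : (Fin N → Bool) → (Fin d → Bool) → (Fin m → Bool)) (k ε : ℝ) : Prop :=
  ∀ p : (Fin N → Bool) → ℝ,
    (∀ x, 0 ≤ p x) → (∑ x, p x) = 1 → (∀ x, p x ≤ (2 : ℝ) ^ (-k)) →
    (1 / 2) * ∑ z : Fin m → Bool,
      |(∑ x, ∑ y : Fin d → Bool, p x * (if Ext x y = z then (1 : ℝ) else 0)) / 2 ^ d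
        - 1 / 2 ^ m| ≤ ε

/-- `(α,γ)`-averaging sampler. -/
def IsAvgSampler (r p q : ℕ)
    (Samp : (Fin r → Bool) → (Fin p → Bool) → (Fin q → Bool)) (α γ : ℝ) : Prop :=
  ∀ f : (Fin q → Bool) → ℝ, (∀ z, -1 ≤ f z ∧ f z ≤ 1) →
    (∑ x : Fin r → Bool,
        if α ≤ |(∑ y : Fin p → Bool, f (Samp x y)) / 2 ^ p - uniformExp f| then (1 : ℝ) else 0)
      / 2 ^ r ≤ γ

/-- The matrix norm `‖M‖₁ = max_i Σ_j |M i j|`. -/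
def matOneNorm {w : ℕ} (M : Matrix (Fin w) (Fin w) ℝ) : ℝ :=
  ⨆ i, ∑ j, |M i j|

end
-- STATEMENT 12
def composeWPR {k : ℕ} {n s : Fin (k + 1) → ℕ} {d : Fin k → ℕ}
    (R : (j : Fin k) → (Fin (n j.succ) → Fin (s j.succ) → Bool) →
      (Fin (d j) → Bool) → Fin (n j.castSucc) → Fin (s j.castSucc) → Bool) :
    (j : ℕ) → (hj : j ≤ k) →
    (Fin (n ⟨j, Nat.lt_succ_of_le hj⟩) → Fin (s ⟨j, Nat.lt_succ_of_le hj⟩) → Bool) →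
    ((t : Fin k) → Fin (d t) → Bool) →
    Fin (n ⟨0, Nat.succ_pos k⟩) → Fin (s ⟨0, Nat.succ_pos k⟩) → Bool
  | 0, _, x, _ => x
  | j + 1, hj, x, i =>
      composeWPR R j (Nat.le_of_succ_le hj) (R ⟨j, hj⟩ x (i ⟨j, hj⟩)) i

lemma uniformExp_sub {α : Type*} [Fintype α] (f g : α → ℝ) :
    uniformExp (fun x => f x - g x) = uniformExp f - uniformExp g := by
  simp [uniformExp, Finset.sum_sub_distrib, sub_div]

lemma uniformExp_const {α : Type*} [Fintype α] [Nonempty α] (c : ℝ) :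
    uniformExp (fun _ : α => c) = c := by
  have h : (Fintype.card α : ℝ) ≠ 0 := by exact_mod_cast Fintype.card_ne_zero
  rw [uniformExp, Finset.sum_const, Finset.card_univ, nsmul_eq_mul]
  exact mul_div_cancel_left₀ c h

lemma composeWPR_congr {k : ℕ} {n s : Fin (k + 1) → ℕ} {d : Fin k → ℕ}
    (R : (j : Fin k) → (Fin (n j.succ) → Fin (s j.succ) → Bool) →
      (Fin (d j) → Bool) → Fin (n j.castSucc) → Fin (s j.castSucc) → Bool) :
    ∀ (j : ℕ) (hj : j ≤ k) x (i i' : (t : Fin k) → Fin (d t) → Bool),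
    (∀ t : Fin k, (t : ℕ) < j → i t = i' t) →
    composeWPR R j hj x i = composeWPR R j hj x i'
  | 0, _, _, _, _, _ => rfl
  | j + 1, hj, x, i, i', hii => by
      show composeWPR R j _ (R ⟨j, hj⟩ x (i ⟨j, hj⟩)) i = _
      rw [hii ⟨j, hj⟩ (Nat.lt_succ_self j)]
      exact composeWPR_congr R j _ _ i i' (fun t ht => hii t (Nat.lt_succ_of_lt ht))


lemma wpr_step {k : ℕ} {n s : Fin (k + 1) → ℕ}
    {F : (j : Fin (k + 1)) → Set ((Fin (n j) → Fin (s j) → Bool) → ℝ)}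
    {d : Fin k → ℕ} {K ε : Fin k → ℝ}
    {R : (j : Fin k) → (Fin (n j.succ) → Fin (s j.succ) → Bool) →
      (Fin (d j) → Bool) → Fin (n j.castSucc) → Fin (s j.castSucc) → Bool}
    {σ : (j : Fin k) → (Fin (d j) → Bool) → ℝ}
    (h : ∀ j : Fin k, IsWPR (F j.castSucc) (F j.succ) (R j) (σ j) (K j) (ε j))
    (f : (Fin (n ⟨0, Nat.succ_pos k⟩) → Fin (s ⟨0, Nat.succ_pos k⟩) → Bool) → ℝ)
    (j : ℕ) (hj : j + 1 ≤ k)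
    (hcl : ∀ i : (t : Fin k) → Fin (d t) → Bool,
      (fun x => f (composeWPR R j (Nat.le_of_succ_le hj) x i))
        ∈ F ⟨j, Nat.lt_succ_of_le (Nat.le_of_succ_le hj)⟩) :
    |uniformExp (fun i : (t : Fin k) → Fin (d t) → Bool =>
        (∏ t ∈ Finset.univ.filter (fun t : Fin k => (t : ℕ) < j), σ t (i t)) *
          uniformExp (fun x => f (composeWPR R j (Nat.le_of_succ_le hj) x i)))
      - uniformExp (fun i : (t : Fin k) → Fin (d t) → Bool =>
        (∏ t ∈ Finset.univ.filter (fun t : Fin k => (t : ℕ) < j + 1), σ t (i t)) *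
          uniformExp (fun x => f (composeWPR R (j + 1) hj x i)))|
      ≤ (∏ t' ∈ Finset.univ.filter (fun t' => t' < (⟨j, hj⟩ : Fin k)), K t') * ε ⟨j, hj⟩ := by
  set jF : Fin k := ⟨j, hj⟩ with hjF
  have hj' : j ≤ k := Nat.le_of_succ_le hj
  set ι := ((t : Fin k) → Fin (d t) → Bool)
  set g₀ : ι → ℝ := fun i =>
    (∏ t ∈ Finset.univ.filter (fun t : Fin k => (t : ℕ) < j), σ t (i t)) *
      uniformExp (fun x => f (composeWPR R j hj' x i)) with hg₀
  set g₁ : ι → ℝ := fun i =>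
    (∏ t ∈ Finset.univ.filter (fun t : Fin k => (t : ℕ) < j + 1), σ t (i t)) *
      uniformExp (fun x => f (composeWPR R (j + 1) hj x i)) with hg₁
  -- the splitting equivalence
  set e := Equiv.piSplitAt jF (fun t : Fin k => Fin (d t) → Bool) with he
  -- canonical fiber representative
  set a₀ : Fin (d jF) → Bool := fun _ => false with ha₀
  -- facts about e.symm
  have hsymm_ne : ∀ (a : Fin (d jF) → Bool) (r) (t : Fin k) (ht : t ≠ jF),
      e.symm (a, r) t = r ⟨t, ht⟩ := by
    intro a r t ht
    simp [he, Equiv.piSplitAt_symm_apply, dif_neg ht]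
  have hsymm_eq : ∀ (a : Fin (d jF) → Bool) r, e.symm (a, r) jF = a := by
    intro a r
    simp [he, Equiv.piSplitAt_symm_apply]
  have hne_of_lt : ∀ t : Fin k, (t : ℕ) < j → t ≠ jF := by
    intro t ht hEq
    rw [hEq] at ht
    exact absurd ht (lt_irrefl j)
  -- the composed function at level j depends only on coordinates < j
  have hcomp : ∀ (a : Fin (d jF) → Bool) r x,
      composeWPR R j hj' x (e.symm (a, r)) = composeWPR R j hj' x (e.symm (a₀, r)) := by
    intro a r x
    apply composeWPR_congr
    intro t ht
    rw [hsymm_ne a r t (hne_of_lt t ht), hsymm_ne a₀ r t (hne_of_lt t ht)]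
  -- the lower-level product is independent of a
  have hA : ∀ (a : Fin (d jF) → Bool) r,
      (∏ t ∈ Finset.univ.filter (fun t : Fin k => (t : ℕ) < j), σ t (e.symm (a, r) t))
        = ∏ t ∈ Finset.univ.filter (fun t : Fin k => (t : ℕ) < j), σ t (e.symm (a₀, r) t) := by
    intro a r
    apply Finset.prod_congr rfl
    intro t ht
    rw [Finset.mem_filter] at ht
    rw [hsymm_ne a r t (hne_of_lt t ht.2), hsymm_ne a₀ r t (hne_of_lt t ht.2)]
  -- filter at j+1 = insert jF (filter at j)
  have hfilter : Finset.univ.filter (fun t : Fin k => (t : ℕ) < j + 1)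
      = insert jF (Finset.univ.filter (fun t : Fin k => (t : ℕ) < j)) := by
    ext t
    simp only [Finset.mem_insert, Finset.mem_filter, Finset.mem_univ, true_and]
    constructor
    · intro ht
      rcases Nat.lt_succ_iff_lt_or_eq.mp ht with ht' | ht'
      · exact Or.inr ht'
      · exact Or.inl (Fin.ext ht')
    · rintro (rfl | ht)
      · exact Nat.lt_succ_self j
      · exact Nat.lt_succ_of_lt ht
  have hjF_not_mem : jF ∉ Finset.univ.filter (fun t : Fin k => (t : ℕ) < j) := by
    simp [hjF]
  -- filter equality for the K-product
  have hfiltK : Finset.univ.filter (fun t' : Fin k => t' < jF)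
      = Finset.univ.filter (fun t : Fin k => (t : ℕ) < j) := by
    ext t
    simp [Fin.lt_def, hjF]
  -- abbreviations
  set A : ((t : {t : Fin k // t ≠ jF}) → Fin (d t.1) → Bool) → ℝ := fun r =>
    ∏ t ∈ Finset.univ.filter (fun t : Fin k => (t : ℕ) < j), σ t (e.symm (a₀, r) t) with hAdef
  set fR : ((t : {t : Fin k // t ≠ jF}) → Fin (d t.1) → Bool) →
      (Fin (n ⟨j, Nat.lt_succ_of_le hj'⟩) → Fin (s ⟨j, Nat.lt_succ_of_le hj'⟩) → Bool) → ℝ :=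
    fun r y => f (composeWPR R j hj' y (e.symm (a₀, r))) with hfR
  have hK0 : ∀ t : Fin k, 0 ≤ K t := fun t =>
    le_trans (abs_nonneg _) ((h t).2.1 (fun _ => false))
  have hKprod : ∀ r, |A r| ≤ ∏ t' ∈ Finset.univ.filter (fun t' : Fin k => t' < jF), K t' := by
    intro r
    rw [hfiltK, hAdef, Finset.abs_prod]
    exact Finset.prod_le_prod (fun t _ => abs_nonneg _) (fun t _ => (h t).2.1 _)
  -- the WPR hypothesis applied to fR r
  have hWPR : ∀ r, |uniformExp (fR r) -
      uniformExp (fun a : Fin (d jF) → Bool =>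
        σ jF a * uniformExp (fun x => fR r (R jF x a)))| ≤ ε jF := by
    intro r
    exact (h jF).1 (fR r) (hcl (e.symm (a₀, r)))
  -- compute g₀ and g₁ on fibers
  have hg₀fib : ∀ a r, g₀ (e.symm (a, r)) = A r * uniformExp (fR r) := by
    intro a r
    rw [hg₀]
    simp only
    rw [hA a r]
    have hfix : (fun x => f (composeWPR R j hj' x (e.symm (a, r)))) = fR r := by
      funext x
      rw [hfR]
      simp only
      rw [hcomp a r x]
    rw [hfix]
  have hg₁fib : ∀ a r, g₁ (e.symm (a, r))
      = A r * (σ jF a * uniformExp (fun x => fR r (R jF x a))) := by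
    intro a r
    rw [hg₁]
    simp only
    rw [hfilter, Finset.prod_insert hjF_not_mem, hA a r, hsymm_eq a r]
    have hcw : ∀ x, composeWPR R (j + 1) hj x (e.symm (a, r))
        = composeWPR R j hj' (R jF x (e.symm (a, r) jF)) (e.symm (a, r)) := fun x => rfl
    have : (fun x => f (composeWPR R (j + 1) hj x (e.symm (a, r))))
        = fun x => fR r (R jF x a) := by
      funext x
      rw [hcw x, hsymm_eq a r, hfR]
      simp only
      rw [hcomp a r (R jF x a)]
    rw [this]
    ring
  -- cardinalities
  set D : ℕ := Fintype.card (Fin (d jF) → Bool) with hD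
  set C : ℕ := Fintype.card ((t : {t : Fin k // t ≠ jF}) → Fin (d t.1) → Bool) with hC
  have hNcard : Fintype.card ι = D * C := by
    rw [Fintype.card_congr e, Fintype.card_prod]
  have hDpos : 0 < D := Fintype.card_pos
  have hCpos : 0 < C := Fintype.card_pos
  -- inner sum bound
  have hinner : ∀ r, |∑ a : Fin (d jF) → Bool, (g₀ (e.symm (a, r)) - g₁ (e.symm (a, r)))|
      ≤ (∏ t' ∈ Finset.univ.filter (fun t' : Fin k => t' < jF), K t') * ε jF * D := by
    intro r
    have hsum : ∑ a : Fin (d jF) → Bool, (g₀ (e.symm (a, r)) - g₁ (e.symm (a, r)))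
        = A r * D * (uniformExp (fR r) -
            uniformExp (fun a : Fin (d jF) → Bool =>
              σ jF a * uniformExp (fun x => fR r (R jF x a)))) := by
      have hDne : (D : ℝ) ≠ 0 := Nat.cast_ne_zero.mpr hDpos.ne'
      have huE : uniformExp (fun a : Fin (d jF) → Bool =>
          σ jF a * uniformExp (fun x => fR r (R jF x a))) * D
          = ∑ a : Fin (d jF) → Bool, σ jF a * uniformExp (fun x => fR r (R jF x a)) := by
        rw [uniformExp, ← hD, div_mul_cancel₀ _ hDne]
      calc ∑ a : Fin (d jF) → Bool, (g₀ (e.symm (a, r)) - g₁ (e.symm (a, r)))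
          = ∑ a : Fin (d jF) → Bool, (A r * uniformExp (fR r)
              - A r * (σ jF a * uniformExp (fun x => fR r (R jF x a)))) := by
            apply Finset.sum_congr rfl
            intro a _
            rw [hg₀fib a r, hg₁fib a r]
        _ = D * (A r * uniformExp (fR r))
              - A r * ∑ a : Fin (d jF) → Bool, σ jF a * uniformExp (fun x => fR r (R jF x a)) := by
            rw [Finset.sum_sub_distrib, Finset.sum_const, Finset.mul_sum]
            simp [hD, nsmul_eq_mul]
        _ = A r * D * (uniformExp (fR r) -
              uniformExp (fun a : Fin (d jF) → Bool =>
                σ jF a * uniformExp (fun x => fR r (R jF x a)))) := by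
            rw [← huE]; ring
    rw [hsum, abs_mul, abs_mul, Nat.abs_cast]
    calc |A r| * D * |uniformExp (fR r) - _|
        ≤ (∏ t' ∈ Finset.univ.filter (fun t' : Fin k => t' < jF), K t') * D * ε jF := by
          apply mul_le_mul (mul_le_mul_of_nonneg_right (hKprod r) (Nat.cast_nonneg D))
            (hWPR r) (abs_nonneg _)
          exact mul_nonneg (Finset.prod_nonneg (fun t _ => hK0 t)) (Nat.cast_nonneg D)
      _ = (∏ t' ∈ Finset.univ.filter (fun t' : Fin k => t' < jF), K t') * ε jF * D := by ring
  -- put everything together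
  rw [← uniformExp_sub]
  rw [uniformExp]
  rw [abs_div, Nat.abs_cast]
  rw [div_le_iff₀ (by exact_mod_cast hNcard ▸ (Nat.cast_pos.mpr (Nat.mul_pos hDpos hCpos)))]
  have hsplit : ∑ i : ι, (g₀ i - g₁ i)
      = ∑ r : (t : {t : Fin k // t ≠ jF}) → Fin (d t.1) → Bool,
          ∑ a : Fin (d jF) → Bool, (g₀ (e.symm (a, r)) - g₁ (e.symm (a, r))) := by
    rw [← Equiv.sum_comp e.symm (fun i => g₀ i - g₁ i), Fintype.sum_prod_type]
    exact Finset.sum_comm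
  rw [hsplit]
  calc |∑ r, ∑ a : Fin (d jF) → Bool, (g₀ (e.symm (a, r)) - g₁ (e.symm (a, r)))|
      ≤ ∑ r, |∑ a : Fin (d jF) → Bool, (g₀ (e.symm (a, r)) - g₁ (e.symm (a, r)))| :=
        Finset.abs_sum_le_sum_abs _ _
    _ ≤ ∑ _r : (t : {t : Fin k // t ≠ jF}) → Fin (d t.1) → Bool,
          (∏ t' ∈ Finset.univ.filter (fun t' : Fin k => t' < jF), K t') * ε jF * D :=
        Finset.sum_le_sum (fun r _ => hinner r)
    _ = (∏ t' ∈ Finset.univ.filter (fun t' : Fin k => t' < jF), K t') * ε jF * D * C := by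
        rw [Finset.sum_const]
        simp [hC, nsmul_eq_mul]
        ring
    _ = (∏ t' ∈ Finset.univ.filter (fun t' : Fin k => t' < jF), K t') * ε jF * (Fintype.card ι) := by
        rw [hNcard]
        push_cast
        ring
lemma wpr_ind {k : ℕ} {n s : Fin (k + 1) → ℕ}
    {F : (j : Fin (k + 1)) → Set ((Fin (n j) → Fin (s j) → Bool) → ℝ)}
    {d : Fin k → ℕ} {K ε : Fin k → ℝ}
    {R : (j : Fin k) → (Fin (n j.succ) → Fin (s j.succ) → Bool) →
      (Fin (d j) → Bool) → Fin (n j.castSucc) → Fin (s j.castSucc) → Bool}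
    {σ : (j : Fin k) → (Fin (d j) → Bool) → ℝ}
    (h : ∀ j : Fin k, IsWPR (F j.castSucc) (F j.succ) (R j) (σ j) (K j) (ε j))
    (f : (Fin (n ⟨0, Nat.succ_pos k⟩) → Fin (s ⟨0, Nat.succ_pos k⟩) → Bool) → ℝ)
    (hf : f ∈ F ⟨0, Nat.succ_pos k⟩) :
    ∀ (j : ℕ) (hj : j ≤ k),
      (∀ i : (t : Fin k) → Fin (d t) → Bool,
        (fun x => f (composeWPR R j hj x i)) ∈ F ⟨j, Nat.lt_succ_of_le hj⟩) ∧
      |uniformExp f -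
        uniformExp (fun i : (t : Fin k) → Fin (d t) → Bool =>
          (∏ t ∈ Finset.univ.filter (fun t : Fin k => (t : ℕ) < j), σ t (i t)) *
            uniformExp (fun x => f (composeWPR R j hj x i)))| ≤
        ∑ t ∈ Finset.univ.filter (fun t : Fin k => (t : ℕ) < j),
          (∏ t' ∈ Finset.univ.filter (fun t' => t' < t), K t') * ε t := by
  intro j
  induction j with
  | zero =>
      intro hj
      constructor
      · intro i
        exact hf
      · have hfil : Finset.univ.filter (fun t : Fin k => (t : ℕ) < 0) = ∅ := by simp
        have hfun : (fun i : (t : Fin k) → Fin (d t) → Bool =>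
            (∏ t ∈ Finset.univ.filter (fun t : Fin k => (t : ℕ) < 0), σ t (i t)) *
              uniformExp (fun x => f (composeWPR R 0 hj x i)))
            = fun _ => uniformExp f := by
          funext i
          rw [hfil, Finset.prod_empty, one_mul]
          rfl
        rw [hfun, hfil, uniformExp_const, Finset.sum_empty, sub_self, abs_zero]
  | succ j ih =>
      intro hj
      have hj' : j ≤ k := Nat.le_of_succ_le hj
      obtain ⟨ihb, iha⟩ := ih hj'
      have hcl1 : ∀ i : (t : Fin k) → Fin (d t) → Bool,
          (fun x => f (composeWPR R (j + 1) hj x i)) ∈ F ⟨j + 1, Nat.lt_succ_of_le hj⟩ := by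
        intro i
        have := (h ⟨j, hj⟩).2.2 (fun y => f (composeWPR R j hj' y i)) (ihb i) (i ⟨j, hj⟩)
        exact this
      refine ⟨hcl1, ?_⟩
      have hstep := wpr_step h f j hj ihb
      have htri := abs_sub_le (uniformExp f)
        (uniformExp (fun i : (t : Fin k) → Fin (d t) → Bool =>
          (∏ t ∈ Finset.univ.filter (fun t : Fin k => (t : ℕ) < j), σ t (i t)) *
            uniformExp (fun x => f (composeWPR R j hj' x i))))
        (uniformExp (fun i : (t : Fin k) → Fin (d t) → Bool =>
          (∏ t ∈ Finset.univ.filter (fun t : Fin k => (t : ℕ) < j + 1), σ t (i t)) *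
            uniformExp (fun x => f (composeWPR R (j + 1) hj x i))))
      have hjF_not_mem : (⟨j, hj⟩ : Fin k) ∉
          Finset.univ.filter (fun t : Fin k => (t : ℕ) < j) := by simp
      have hfilter : Finset.univ.filter (fun t : Fin k => (t : ℕ) < j + 1)
          = insert (⟨j, hj⟩ : Fin k) (Finset.univ.filter (fun t : Fin k => (t : ℕ) < j)) := by
        ext t
        simp only [Finset.mem_insert, Finset.mem_filter, Finset.mem_univ, true_and]
        constructor
        · intro ht
          rcases Nat.lt_succ_iff_lt_or_eq.mp ht with ht' | ht'
          · exact Or.inr ht'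
          · exact Or.inl (Fin.ext ht')
        · rintro (rfl | ht)
          · exact Nat.lt_succ_self j
          · exact Nat.lt_succ_of_lt ht
      have hsum : ∑ t ∈ Finset.univ.filter (fun t : Fin k => (t : ℕ) < j + 1),
            (∏ t' ∈ Finset.univ.filter (fun t' => t' < t), K t') * ε t
          = (∑ t ∈ Finset.univ.filter (fun t : Fin k => (t : ℕ) < j),
              (∏ t' ∈ Finset.univ.filter (fun t' => t' < t), K t') * ε t)
            + (∏ t' ∈ Finset.univ.filter (fun t' => t' < (⟨j, hj⟩ : Fin k)), K t') * ε ⟨j, hj⟩ := by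
        rw [hfilter, Finset.sum_insert hjF_not_mem]
        ring
      rw [hsum]
      exact le_trans htri (add_le_add iha hstep)


theorem stmt12 (k : ℕ) (hk : 1 ≤ k)
    (n s : Fin (k + 1) → ℕ)
    (F : (j : Fin (k + 1)) → Set ((Fin (n j) → Fin (s j) → Bool) → ℝ))
    (d : Fin k → ℕ) (K ε : Fin k → ℝ)
    (R : (j : Fin k) → (Fin (n j.succ) → Fin (s j.succ) → Bool) →
      (Fin (d j) → Bool) → Fin (n j.castSucc) → Fin (s j.castSucc) → Bool)
    (σ : (j : Fin k) → (Fin (d j) → Bool) → ℝ)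
    (h : ∀ j : Fin k, IsWPR (F j.castSucc) (F j.succ) (R j) (σ j) (K j) (ε j)) :
    IsWPR (ι := (t : Fin k) → Fin (d t) → Bool)
      (F ⟨0, Nat.succ_pos k⟩) (F (Fin.last k))
      (fun x i => composeWPR R k le_rfl x i)
      (fun i => ∏ j, σ j (i j))
      (∏ j, K j)
      (∑ j, (∏ t ∈ Finset.univ.filter (fun t => t < j), K t) * ε j) := by
  have hfilt_univ : Finset.univ.filter (fun t : Fin k => (t : ℕ) < k) = Finset.univ := by
    ext t; simp [t.isLt]
  have hK0 : ∀ t : Fin k, 0 ≤ K t := fun t =>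
    le_trans (abs_nonneg _) ((h t).2.1 (fun _ => false))
  refine ⟨?_, ?_, ?_⟩
  · intro f hf
    have := (wpr_ind h f hf k le_rfl).2
    rw [hfilt_univ] at this
    convert this using 2
    rfl
  · intro i
    calc |∏ j, σ j (i j)| = ∏ j, |σ j (i j)| := Finset.abs_prod _ _
      _ ≤ ∏ j, K j := Finset.prod_le_prod (fun t _ => abs_nonneg _) (fun t _ => (h t).2.1 _)
  · intro f hf i
    exact (wpr_ind h f hf k le_rfl).1 i
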